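/- For every δ with 0 < δ < 1/4 and every ε with 0 < ε < 1 there exists a C¹ function τ : ℝ → ℝ such that τ(r) = 1 for r ≤ δε, τ(r) = 0 for r ≥ ε, 0 ≤ τ ≤ 1 everywhere, and there is a constant C (independent of δ and ε) with |τ'(r)| ≤ C · r⁻¹ · |log δ|⁻¹ for all r > 0. -/

import Mathlib

open Real

lemma smoothTransition_deriv_bound :
    ∃ M : ℝ, 0 < M ∧ ∀ x : ℝ, |deriv Real.smoothTransition x| ≤ M := by
  have hc : Continuous (fun x => |deriv Real.smoothTransition x|) :=
    ((Real.smoothTransition.contDiff (n := 2)).continuous_deriv (by norm_num)).abs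
  obtain ⟨x₀, hx₀, hmax'⟩ := (isCompact_Icc (a := (0:ℝ)) (b := 1)).exists_isMaxOn
    (Set.nonempty_Icc.2 zero_le_one) hc.continuousOn
  have hmax : ∀ y ∈ Set.Icc (0:ℝ) 1, |deriv Real.smoothTransition y| ≤
      |deriv Real.smoothTransition x₀| := fun y hy => hmax' hy
  refine ⟨|deriv Real.smoothTransition x₀| + 1, by positivity, fun x => ?_⟩
  rcases le_or_gt x 0 with hx | hx
  · rcases eq_or_lt_of_le hx with rfl | hx'
    · exact le_trans (hmax 0 (by norm_num)) (by linarith)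
    · have : deriv Real.smoothTransition x = 0 := by
        have h : Real.smoothTransition =ᶠ[nhds x] fun _ => (0:ℝ) := by
          filter_upwards [Iio_mem_nhds hx'] with y hy
          exact Real.smoothTransition.zero_of_nonpos (le_of_lt hy)
        rw [h.deriv_eq, deriv_const]
      simp [this]
      linarith [abs_nonneg (deriv Real.smoothTransition x₀)]
  · rcases le_or_gt x 1 with hx1 | hx1
    · exact le_trans (hmax x ⟨hx.le, hx1⟩) (by linarith)
    · have : deriv Real.smoothTransition x = 0 := by
        have h : Real.smoothTransition =ᶠ[nhds x] fun _ => (1:ℝ) := by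
          filter_upwards [Ioi_mem_nhds hx1] with y hy
          exact Real.smoothTransition.one_of_one_le (le_of_lt hy)
        rw [h.deriv_eq, deriv_const]
      simp [this]
      linarith [abs_nonneg (deriv Real.smoothTransition x₀)]

theorem log_cutoff_lemma :
    ∃ C : ℝ, 0 < C ∧
      ∀ δ ε : ℝ, 0 < δ → δ < 1/4 → 0 < ε → ε < 1 →
        ∃ τ : ℝ → ℝ, ContDiff ℝ 1 τ ∧
          (∀ r : ℝ, r ≤ δ * ε → τ r = 1) ∧
          (∀ r : ℝ, ε ≤ r → τ r = 0) ∧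
          (∀ r : ℝ, 0 ≤ τ r ∧ τ r ≤ 1) ∧
          (∀ r : ℝ, 0 < r → |deriv τ r| ≤ C * r⁻¹ * |Real.log δ|⁻¹) := by
  obtain ⟨M, hM0, hM⟩ := smoothTransition_deriv_bound
  refine ⟨M, hM0, fun δ ε hδ hδ4 hε hε1 => ?_⟩
  set c : ℝ := δ * ε / 2 with hc_def
  have hc0 : 0 < c := by positivity
  have hδε : 0 < δ * ε := by positivity
  have hcδε : c < δ * ε := by rw [hc_def]; linarith
  have hδεε : δ * ε < ε := by nlinarith
  have hlogδ : Real.log δ < 0 := Real.log_neg hδ (by linarith)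
  set k : ℝ := (-Real.log δ)⁻¹ with hk_def
  have hk0 : 0 < k := inv_pos.2 (by linarith)
  set g : ℝ → ℝ := fun x => (Real.log ε - Real.log x) * k with hg_def
  set F := Real.smoothTransition with hF_def
  set τ : ℝ → ℝ := fun r => F (g (max r c)) with hτ_def
  have hlogmul : Real.log (δ * ε) = Real.log δ + Real.log ε := Real.log_mul hδ.ne' hε.ne'
  -- τ = 1 for r ≤ δε
  have h1 : ∀ r : ℝ, r ≤ δ * ε → τ r = 1 := by
    intro r hr
    have hx0 : 0 < max r c := lt_of_lt_of_le hc0 (le_max_right _ _)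
    have hlog : Real.log (max r c) ≤ Real.log (δ * ε) :=
      Real.log_le_log hx0 (max_le hr hcδε.le)
    have hge : (1:ℝ) ≤ (Real.log ε - Real.log (max r c)) * k := by
      rw [hk_def, ← div_eq_mul_inv,
        le_div_iff₀ (by linarith : (0:ℝ) < -Real.log δ)]
      rw [hlogmul] at hlog
      linarith
    exact Real.smoothTransition.one_of_one_le hge
  -- τ = 0 for r ≥ ε
  have h0 : ∀ r : ℝ, ε ≤ r → τ r = 0 := by
    intro r hr
    have hmax : max r c = r := max_eq_left (by linarith)
    have hle : g r ≤ 0 := by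
      have h' : Real.log ε ≤ Real.log r := Real.log_le_log hε hr
      have : (Real.log ε - Real.log r) * k ≤ 0 :=
        mul_nonpos_iff.2 (Or.inr ⟨by linarith, hk0.le⟩)
      exact this
    rw [hτ_def]
    simp only [hmax]
    exact Real.smoothTransition.zero_of_nonpos hle
  -- eventually eq on Ioi c
  have heq : ∀ r : ℝ, c < r → τ =ᶠ[nhds r] fun x => F (g x) := by
    intro r hr
    filter_upwards [Ioi_mem_nhds hr] with y hy
    rw [hτ_def]
    simp only [max_eq_left (le_of_lt (Set.mem_Ioi.mp hy))]
  have heq1 : ∀ r : ℝ, r < δ * ε → τ =ᶠ[nhds r] fun _ => (1:ℝ) := by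
    intro r hr
    filter_upwards [Iio_mem_nhds hr] with y hy
    exact h1 y hy.le
  have hFg : ∀ r : ℝ, c < r → ContDiffAt ℝ 1 (fun x => F (g x)) r := by
    intro r hr
    have hr0 : (0:ℝ) < r := hc0.trans hr
    exact Real.smoothTransition.contDiffAt.comp r
      ((contDiffAt_const.sub (Real.contDiffAt_log.mpr hr0.ne')).mul contDiffAt_const)
  refine ⟨τ, ?_, h1, h0, fun r => ⟨Real.smoothTransition.nonneg _,
    Real.smoothTransition.le_one _⟩, ?_⟩
  · rw [contDiff_iff_contDiffAt]
    intro r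
    rcases lt_or_ge r (δ * ε) with hr | hr
    · exact contDiffAt_const.congr_of_eventuallyEq (heq1 r hr)
    · exact (hFg r (hcδε.trans_le hr)).congr_of_eventuallyEq (heq r (hcδε.trans_le hr))
  · intro r hr0
    rcases lt_or_ge r (δ * ε) with hr | hr
    · have : deriv τ r = 0 := by rw [(heq1 r hr).deriv_eq, deriv_const]
      rw [this]
      simp only [abs_zero]
      positivity
    · have hrc : c < r := hcδε.trans_le hr
      have hg' : HasDerivAt g ((0 - r⁻¹) * k) r :=
        ((hasDerivAt_const r (Real.log ε)).sub (Real.hasDerivAt_log hr0.ne')).mul_const k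
      have hF' : HasDerivAt F (deriv F (g r)) (g r) :=
        ((Real.smoothTransition.contDiff (n := 1)).differentiable one_ne_zero).differentiableAt.hasDerivAt
      have hcomp : HasDerivAt (fun x => F (g x)) (deriv F (g r) * ((0 - r⁻¹) * k)) r :=
        hF'.comp r hg'
      have hdτ : deriv τ r = deriv F (g r) * ((0 - r⁻¹) * k) := by
        rw [(heq r hrc).deriv_eq, hcomp.deriv]
      rw [hdτ]
      have habs : |Real.log δ| = -Real.log δ := abs_of_neg hlogδ
      have : |deriv F (g r) * ((0 - r⁻¹) * k)| = |deriv F (g r)| * (r⁻¹ * k) := by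
        rw [abs_mul, abs_mul, zero_sub, abs_neg, abs_of_pos (inv_pos.2 hr0), abs_of_pos hk0]
      rw [this, habs, ← hk_def]
      have : |deriv F (g r)| * (r⁻¹ * k) ≤ M * (r⁻¹ * k) :=
        mul_le_mul_of_nonneg_right (hM _) (by positivity)
      linarith [this]
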